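/- Let C_* be the complex with C_{2n+1} = E ⊗ P and differential coming from the derivation ∂ on the graded algebra L = P(σy_1) ⊗ E(y_1^h, y_1^v)/(y_1^h y_1^v) ⊗ P(y_2^h, y_2^v) determined by ∂(y_1^h) = ∂(y_1^v) = ∂(σy_1) = 0, ∂(y_2^h) = y_1^h, ∂(y_2^v) = y_1^v. Then ∂ vanishes on all odd-degree elements of L, and the rank of ∂ : L_{2n} → L_{2n-1} equals n(n+3)/2 for all n ≥ 1. -/

import Mathlib

/-- Weights of the generators `y₁ʰ, y₁ᵛ, σy₁, y₂ʰ, y₂ᵛ`. -/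
noncomputable def stmt13w : Fin 5 → ℕ := ![1, 1, 2, 2, 2]

/-- The relations `(y₁ʰ)² = (y₁ᵛ)² = y₁ʰ y₁ᵛ = 0`. -/
noncomputable def stmt13I : Ideal (MvPolynomial (Fin 5) ℚ) :=
  Ideal.span {(MvPolynomial.X 0 : MvPolynomial (Fin 5) ℚ) ^ 2,
    (MvPolynomial.X 1) ^ 2, MvPolynomial.X 0 * MvPolynomial.X 1}

/-- The derivation `∂` with `∂y₁ʰ = ∂y₁ᵛ = ∂(σy₁) = 0`, `∂y₂ʰ = y₁ʰ`, `∂y₂ᵛ = y₁ᵛ`. -/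
noncomputable def stmt13D :
    Derivation ℚ (MvPolynomial (Fin 5) ℚ) (MvPolynomial (Fin 5) ℚ) :=
  MvPolynomial.mkDerivation ℚ
    ![0, 0, 0, MvPolynomial.X 0, MvPolynomial.X 1]

/-- The degree-`n` component of `L = P(σy₁) ⊗ E(y₁ʰ, y₁ᵛ)/(y₁ʰ y₁ᵛ) ⊗ P(y₂ʰ, y₂ᵛ)`
inside the `ℚ`-module quotient by the relation ideal. -/
noncomputable def stmt13L (n : ℕ) :
    Submodule ℚ (MvPolynomial (Fin 5) ℚ ⧸ (stmt13I.restrictScalars ℚ)) :=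
  Submodule.map (stmt13I.restrictScalars ℚ).mkQ
    (MvPolynomial.weightedHomogeneousSubmodule ℚ stmt13w n)

open MvPolynomial

section Aux

abbrev St13R := MvPolynomial (Fin 5) ℚ

lemma st13_weight (d : Fin 5 →₀ ℕ) :
    Finsupp.weight stmt13w d = d 0 + d 1 + 2 * d 2 + 2 * d 3 + 2 * d 4 := by
  rw [Finsupp.weight_apply, Finsupp.sum_fintype]
  · simp only [Fin.sum_univ_five, stmt13w, smul_eq_mul, Matrix.cons_val_zero,
      Matrix.cons_val_one, Matrix.head_cons, Matrix.cons_val_two, Matrix.tail_cons,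
      Matrix.cons_val_three, Matrix.cons_val_four]
    ring
  · intro i; simp

lemma st13_monomial_mem (d : Fin 5 →₀ ℕ) (c : ℚ)
    (h : 2 ≤ d 0 ∨ 2 ≤ d 1 ∨ (1 ≤ d 0 ∧ 1 ≤ d 1)) :
    (monomial d c : St13R) ∈ stmt13I := by
  rcases h with h | h | ⟨h0, h1⟩
  · have he : (monomial d c : St13R)
        = monomial (d - Finsupp.single 0 2) c * (X 0) ^ 2 := by
      rw [X_pow_eq_monomial, monomial_mul, mul_one,
        tsub_add_cancel_of_le (Finsupp.single_le_iff.mpr h)]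
    rw [he]
    exact Ideal.mul_mem_left _ _ (Ideal.subset_span (by simp))
  · have he : (monomial d c : St13R)
        = monomial (d - Finsupp.single 1 2) c * (X 1) ^ 2 := by
      rw [X_pow_eq_monomial, monomial_mul, mul_one,
        tsub_add_cancel_of_le (Finsupp.single_le_iff.mpr h)]
    rw [he]
    exact Ideal.mul_mem_left _ _ (Ideal.subset_span (by simp))
  · have hX : (X 0 * X 1 : St13R)
        = monomial (Finsupp.single 0 1 + Finsupp.single 1 1) 1 := by
      rw [← pow_one (X 0 : St13R), ← pow_one (X 1 : St13R), X_pow_eq_monomial,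
        X_pow_eq_monomial, monomial_mul, one_mul]
    have hle : Finsupp.single (0 : Fin 5) 1 + Finsupp.single 1 1 ≤ d := by
      intro i
      by_cases h0' : i = 0
      · subst h0'; simpa [Finsupp.single_apply] using h0
      · by_cases h1' : i = 1
        · subst h1'; simpa [Finsupp.single_apply] using h1
        · simp [Finsupp.single_apply, h0', h1', Ne.symm]
    have he : (monomial d c : St13R)
        = monomial (d - (Finsupp.single 0 1 + Finsupp.single 1 1)) c * (X 0 * X 1) := by
      rw [hX, monomial_mul, mul_one, tsub_add_cancel_of_le hle]
    rw [he]
    exact Ideal.mul_mem_left _ _ (Ideal.subset_span (by simp))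

lemma st13_D_monomial (d : Fin 5 →₀ ℕ) (c : ℚ) :
    stmt13D (monomial d c) =
      monomial (d - Finsupp.single 3 1 + Finsupp.single 0 1) (c * d 3)
      + monomial (d - Finsupp.single 4 1 + Finsupp.single 1 1) (c * d 4) := by
  rw [stmt13D, MvPolynomial.mkDerivation_monomial]
  rw [Finsupp.sum_fintype]
  · rw [Fin.sum_univ_five]
    simp only [Matrix.cons_val_zero, Matrix.cons_val_one, Matrix.head_cons,
      Matrix.cons_val_two, Matrix.tail_cons, Matrix.cons_val_three, Matrix.cons_val_four,
      smul_zero, zero_add, add_zero, smul_eq_mul]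
    simp only [mul_zero, zero_add, add_zero]
    rw [← pow_one (X 0 : St13R), ← pow_one (X 1 : St13R), X_pow_eq_monomial,
      X_pow_eq_monomial, monomial_mul, monomial_mul, mul_one, mul_one, smul_add,
      smul_monomial, smul_monomial, smul_eq_mul, smul_eq_mul]
  · intro i; simp

lemma st13_D_monomial_mem (d : Fin 5 →₀ ℕ) (c : ℚ) (h : 1 ≤ d 0 + d 1) :
    stmt13D (monomial d c) ∈ stmt13I := by
  rw [st13_D_monomial]
  refine Ideal.add_mem _ (st13_monomial_mem _ _ ?_) (st13_monomial_mem _ _ ?_) <;>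
    · simp only [Finsupp.add_apply, Finsupp.tsub_apply, Finsupp.single_apply, Fin.reduceEq,
        reduceIte]
      omega

lemma st13_part1 : ∀ m : ℕ, Odd m →
    ∀ p ∈ MvPolynomial.weightedHomogeneousSubmodule ℚ stmt13w m,
      stmt13D.toLinearMap p ∈ stmt13I := by
  intro m hm p hp
  have hsum : stmt13D.toLinearMap p
      = ∑ d ∈ p.support, stmt13D (monomial d (coeff d p)) := by
    conv_lhs => rw [p.as_sum]
    rw [map_sum]
    rfl
  rw [hsum]
  refine Ideal.sum_mem _ fun d hd => st13_D_monomial_mem _ _ ?_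
  rw [MvPolynomial.mem_weightedHomogeneousSubmodule] at hp
  have hw := hp (MvPolynomial.mem_support_iff.mp hd)
  rw [st13_weight] at hw
  obtain ⟨k, hk⟩ := hm
  omega

/-- pairs `(a,b)` with `a + b ≤ m` -/
noncomputable def st13A (m : ℕ) : Finset (ℕ × ℕ) :=
  (Finset.range (m + 1)).biUnion fun s => Finset.HasAntidiagonal.antidiagonal s

lemma mem_st13A {m : ℕ} {p : ℕ × ℕ} : p ∈ st13A m ↔ p.1 + p.2 ≤ m := by
  simp only [st13A, Finset.mem_biUnion, Finset.mem_range, Finset.HasAntidiagonal.mem_antidiagonal]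
  constructor
  · rintro ⟨s, hs, rfl⟩; omega
  · intro h; exact ⟨p.1 + p.2, by omega, rfl⟩

lemma card_st13A (m : ℕ) : (st13A m).card = (m + 1) * (m + 2) / 2 := by
  rw [st13A, Finset.card_biUnion]
  · simp only [Finset.Nat.card_antidiagonal]
    have h1 : ∑ s ∈ Finset.range (m + 1), (s + 1) = ∑ s ∈ Finset.range (m + 2), s := by
      rw [Finset.sum_range_succ' (fun s => s) (m + 1)]
      simp
    rw [h1, Finset.sum_range_id]
    have h2 : m + 2 - 1 = m + 1 := by omega
    rw [h2, Nat.mul_comm]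
  · intro s _ t _ hst
    rw [Function.onFun, Finset.disjoint_left]
    intro p hp hp'
    exact hst ((Finset.HasAntidiagonal.mem_antidiagonal.mp hp).symm.trans
      (Finset.HasAntidiagonal.mem_antidiagonal.mp hp'))

/-- index set for the image basis -/
noncomputable def st13S (m : ℕ) : Finset (ℕ × ℕ) := (st13A m).erase (m, 0)

lemma mem_st13S {m : ℕ} {p : ℕ × ℕ} :
    p ∈ st13S m ↔ p.1 + p.2 ≤ m ∧ p ≠ (m, 0) := by
  simp only [st13S, Finset.mem_erase, mem_st13A]
  tauto

lemma card_st13S (m : ℕ) : (st13S m).card = m * (m + 3) / 2 := by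
  rw [st13S, Finset.card_erase_of_mem (mem_st13A.mpr (by omega)), card_st13A]
  have h : (m + 1) * (m + 2) = m * (m + 3) + 2 := by ring
  omega

lemma st13_coeff_I {q : St13R} (hq : q ∈ stmt13I) (d : Fin 5 →₀ ℕ) (hd : d 0 + d 1 ≤ 1) :
    MvPolynomial.coeff d q = 0 := by
  rw [stmt13I, Ideal.mem_span_insert] at hq
  obtain ⟨u, z, hz, rfl⟩ := hq
  rw [Ideal.mem_span_insert] at hz
  obtain ⟨v, z2, hz2, rfl⟩ := hz
  rw [Ideal.mem_span_singleton] at hz2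
  obtain ⟨w, rfl⟩ := hz2
  have h0 : coeff d (u * X 0 ^ 2) = 0 := by
    rw [X_pow_eq_monomial, coeff_mul_monomial', if_neg]
    intro hle
    have := Finsupp.single_le_iff.mp hle
    omega
  have h1 : coeff d (v * X 1 ^ 2) = 0 := by
    rw [X_pow_eq_monomial, coeff_mul_monomial', if_neg]
    intro hle
    have := Finsupp.single_le_iff.mp hle
    omega
  have hX : (X 0 * X 1 : St13R)
      = monomial (Finsupp.single 0 1 + Finsupp.single 1 1) 1 := by
    rw [← pow_one (X 0 : St13R), ← pow_one (X 1 : St13R), X_pow_eq_monomial,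
      X_pow_eq_monomial, monomial_mul, one_mul]
  have h2 : coeff d (X 0 * X 1 * w) = 0 := by
    rw [mul_comm, hX, coeff_mul_monomial', if_neg]
    intro hle
    have g0 := Finsupp.le_def.mp hle 0
    have g1 := Finsupp.le_def.mp hle 1
    simp only [Finsupp.add_apply, Finsupp.single_apply, Fin.reduceEq, reduceIte] at g0 g1
    omega
  rw [coeff_add, coeff_add, h0, h1, h2]
  ring

/-- the exponent of the monomial `X2^a X3^b X4^(m-a-b)` -/
noncomputable def st13d (m a b : ℕ) : Fin 5 →₀ ℕ :=
  Finsupp.single 2 a + Finsupp.single 3 b + Finsupp.single 4 (m - a - b)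

/-- the exponent of the monomial `X0 X2^a X3^(b-1) X4^(m-a-b)` -/
noncomputable def st13t0 (m a b : ℕ) : Fin 5 →₀ ℕ :=
  Finsupp.single 0 1 + Finsupp.single 2 a + Finsupp.single 3 (b - 1)
    + Finsupp.single 4 (m - a - b)

/-- the exponent of the monomial `X1 X2^a X3^b X4^(m-a-b-1)` -/
noncomputable def st13t1 (m a b : ℕ) : Fin 5 →₀ ℕ :=
  Finsupp.single 1 1 + Finsupp.single 2 a + Finsupp.single 3 b
    + Finsupp.single 4 (m - a - b - 1)

lemma st13d_apply (m a b : ℕ) (i : Fin 5) :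
    st13d m a b i = ![0, 0, a, b, m - a - b] i := by
  fin_cases i <;>
    simp [st13d, Finsupp.single_apply]

lemma st13t0_apply (m a b : ℕ) (i : Fin 5) :
    st13t0 m a b i = ![1, 0, a, b - 1, m - a - b] i := by
  fin_cases i <;>
    simp [st13t0, Finsupp.single_apply]

lemma st13t1_apply (m a b : ℕ) (i : Fin 5) :
    st13t1 m a b i = ![0, 1, a, b, m - a - b - 1] i := by
  fin_cases i <;>
    simp [st13t1, Finsupp.single_apply]

lemma st13_D_mon (m a b : ℕ) :
    stmt13D (monomial (st13d m a b) (1 : ℚ)) =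
      monomial (st13t0 m a b) (b : ℚ) + monomial (st13t1 m a b) ((m - a - b : ℕ) : ℚ) := by
  rw [st13_D_monomial]
  have e0 : st13d m a b - Finsupp.single 3 1 + Finsupp.single 0 1 = st13t0 m a b := by
    ext i
    have h1 := st13d_apply m a b i
    have h2 := st13t0_apply m a b i
    fin_cases i <;>
      simp_all [Finsupp.single_apply]
  have e1 : st13d m a b - Finsupp.single 4 1 + Finsupp.single 1 1 = st13t1 m a b := by
    ext i
    have h1 := st13d_apply m a b i
    have h2 := st13t1_apply m a b i
    fin_cases i <;>
      simp_all [Finsupp.single_apply]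
  rw [e0, e1]
  have h3 : st13d m a b 3 = b := by simpa using st13d_apply m a b 3
  have h4 : st13d m a b 4 = m - a - b := by simpa using st13d_apply m a b 4
  rw [h3, h4, one_mul, one_mul]

lemma st13_coeff_t0 (m a b a' b' : ℕ) (h : a + b ≤ m) (h' : a' + b' ≤ m) (hb : 1 ≤ b) :
    MvPolynomial.coeff (st13t0 m a b) (stmt13D (monomial (st13d m a' b') (1 : ℚ)))
      = if a' = a ∧ b' = b then (b : ℚ) else 0 := by
  rw [st13_D_mon, coeff_add, coeff_monomial, coeff_monomial]
  have h1 : st13t1 m a' b' ≠ st13t0 m a b := by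
    intro hE
    have h00 := DFunLike.congr_fun hE 0
    have e1 : st13t1 m a' b' 0 = 0 := by simpa using st13t1_apply m a' b' 0
    have e2 : st13t0 m a b 0 = 1 := by simpa using st13t0_apply m a b 0
    rw [e1, e2] at h00
    exact absurd h00 (by omega)
  rw [if_neg h1, add_zero]
  by_cases hq : a' = a ∧ b' = b
  · obtain ⟨rfl, rfl⟩ := hq
    rw [if_pos rfl, if_pos ⟨rfl, rfl⟩]
  · rw [if_neg, if_neg hq]
    intro hE
    apply hq
    have h22 := DFunLike.congr_fun hE 2
    have h33 := DFunLike.congr_fun hE 3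
    have h44 := DFunLike.congr_fun hE 4
    have e2 : st13t0 m a' b' 2 = a' := by simpa using st13t0_apply m a' b' 2
    have e2' : st13t0 m a b 2 = a := by simpa using st13t0_apply m a b 2
    have e3 : st13t0 m a' b' 3 = b' - 1 := by simpa using st13t0_apply m a' b' 3
    have e3' : st13t0 m a b 3 = b - 1 := by simpa using st13t0_apply m a b 3
    have e4 : st13t0 m a' b' 4 = m - a' - b' := by simpa using st13t0_apply m a' b' 4
    have e4' : st13t0 m a b 4 = m - a - b := by simpa using st13t0_apply m a b 4
    rw [e2, e2'] at h22
    rw [e3, e3'] at h33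
    rw [e4, e4'] at h44
    constructor <;> omega

lemma st13_coeff_t1 (m a b a' b' : ℕ) :
    MvPolynomial.coeff (st13t1 m a b) (stmt13D (monomial (st13d m a' b') (1 : ℚ)))
      = if a' = a ∧ b' = b then ((m - a - b : ℕ) : ℚ) else 0 := by
  rw [st13_D_mon, coeff_add, coeff_monomial, coeff_monomial]
  have h1 : st13t0 m a' b' ≠ st13t1 m a b := by
    intro hE
    have h00 := DFunLike.congr_fun hE 0
    have e1 : st13t0 m a' b' 0 = 1 := by simpa using st13t0_apply m a' b' 0
    have e2 : st13t1 m a b 0 = 0 := by simpa using st13t1_apply m a b 0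
    rw [e1, e2] at h00
    exact absurd h00 (by omega)
  rw [if_neg h1, zero_add]
  by_cases hq : a' = a ∧ b' = b
  · obtain ⟨rfl, rfl⟩ := hq
    rw [if_pos rfl, if_pos ⟨rfl, rfl⟩]
  · rw [if_neg, if_neg hq]
    intro hE
    apply hq
    have h22 := DFunLike.congr_fun hE 2
    have h33 := DFunLike.congr_fun hE 3
    have e2 : st13t1 m a' b' 2 = a' := by simpa using st13t1_apply m a' b' 2
    have e2' : st13t1 m a b 2 = a := by simpa using st13t1_apply m a b 2
    have e3 : st13t1 m a' b' 3 = b' := by simpa using st13t1_apply m a' b' 3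
    have e3' : st13t1 m a b 3 = b := by simpa using st13t1_apply m a b 3
    rw [e2, e2'] at h22
    rw [e3, e3'] at h33
    exact ⟨h22, h33⟩

/-- the image vectors in the quotient -/
noncomputable def st13v (m : ℕ) (p : ℕ × ℕ) :
    MvPolynomial (Fin 5) ℚ ⧸ (stmt13I.restrictScalars ℚ) :=
  (stmt13I.restrictScalars ℚ).mkQ (stmt13D (monomial (st13d m p.1 p.2) (1 : ℚ)))

lemma st13_indep (m : ℕ) :
    LinearIndependent ℚ (fun i : ↥(st13S m) => st13v m i.1) := by
  rw [Fintype.linearIndependent_iff]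
  intro g hg i
  set P : St13R := ∑ j : ↥(st13S m),
      g j • stmt13D (monomial (st13d m j.1.1 j.1.2) (1 : ℚ)) with hPdef
  have hP : P ∈ stmt13I := by
    have hmk : (stmt13I.restrictScalars ℚ).mkQ P = 0 := by
      rw [hPdef, map_sum]
      simp only [map_smul]
      exact hg
    rw [Submodule.mkQ_apply, Submodule.Quotient.mk_eq_zero] at hmk
    exact (Submodule.restrictScalars_mem ℚ _ _).mp hmk
  obtain ⟨⟨a, b⟩, hi⟩ := i
  obtain ⟨hab, hne⟩ := mem_st13S.mp hi
  by_cases hb : 1 ≤ b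
  · -- use the coefficient at `st13t0 m a b`
    have hc : MvPolynomial.coeff (st13t0 m a b) P = 0 := by
      refine st13_coeff_I hP _ ?_
      have e0 : st13t0 m a b 0 = 1 := by simpa using st13t0_apply m a b 0
      have e1 : st13t0 m a b 1 = 0 := by simpa using st13t0_apply m a b 1
      omega
    rw [hPdef, coeff_sum] at hc
    have hterm : ∀ j : ↥(st13S m),
        MvPolynomial.coeff (st13t0 m a b)
          (g j • stmt13D (monomial (st13d m j.1.1 j.1.2) (1 : ℚ)))
        = if j = ⟨(a, b), hi⟩ then g j * (b : ℚ) else 0 := by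
      intro j
      rw [coeff_smul, st13_coeff_t0 m a b j.1.1 j.1.2 hab (mem_st13S.mp j.2).1 hb]
      by_cases hj : j.1.1 = a ∧ j.1.2 = b
      · have hjj : j = ⟨(a, b), hi⟩ := Subtype.ext (Prod.ext hj.1 hj.2)
        rw [if_pos hj, if_pos hjj, smul_eq_mul]
      · have hjj : j ≠ ⟨(a, b), hi⟩ := by
          intro h
          apply hj
          rw [h]
          exact ⟨rfl, rfl⟩
        rw [if_neg hj, if_neg hjj, smul_zero]
    rw [Finset.sum_congr rfl fun j _ => hterm j, Finset.sum_ite_eq'] at hc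
    rw [if_pos (Finset.mem_univ _)] at hc
    have hbQ : (b : ℚ) ≠ 0 := Nat.cast_ne_zero.mpr (by omega)
    exact (mul_eq_zero.mp hc).resolve_right hbQ
  · -- b = 0 : use the coefficient at `st13t1 m a b`
    have hc : MvPolynomial.coeff (st13t1 m a b) P = 0 := by
      refine st13_coeff_I hP _ ?_
      have e0 : st13t1 m a b 0 = 0 := by simpa using st13t1_apply m a b 0
      have e1 : st13t1 m a b 1 = 1 := by simpa using st13t1_apply m a b 1
      omega
    rw [hPdef, coeff_sum] at hc
    have hterm : ∀ j : ↥(st13S m),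
        MvPolynomial.coeff (st13t1 m a b)
          (g j • stmt13D (monomial (st13d m j.1.1 j.1.2) (1 : ℚ)))
        = if j = ⟨(a, b), hi⟩ then g j * ((m - a - b : ℕ) : ℚ) else 0 := by
      intro j
      rw [coeff_smul, st13_coeff_t1 m a b j.1.1 j.1.2]
      by_cases hj : j.1.1 = a ∧ j.1.2 = b
      · have hjj : j = ⟨(a, b), hi⟩ := Subtype.ext (Prod.ext hj.1 hj.2)
        rw [if_pos hj, if_pos hjj, smul_eq_mul]
      · have hjj : j ≠ ⟨(a, b), hi⟩ := by
          intro h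
          apply hj
          rw [h]
          exact ⟨rfl, rfl⟩
        rw [if_neg hj, if_neg hjj, smul_zero]
    rw [Finset.sum_congr rfl fun j _ => hterm j, Finset.sum_ite_eq'] at hc
    rw [if_pos (Finset.mem_univ _)] at hc
    have hbQ : ((m - a - b : ℕ) : ℚ) ≠ 0 := by
      refine Nat.cast_ne_zero.mpr ?_
      have : a ≠ m ∨ b ≠ 0 := by
        by_contra hcon
        push_neg at hcon
        exact hne (by rw [hcon.1, hcon.2])
      omega
    exact (mul_eq_zero.mp hc).resolve_right hbQ

lemma st13_span (m : ℕ) :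
    Submodule.map (stmt13I.restrictScalars ℚ).mkQ
      (Submodule.map stmt13D.toLinearMap
        (MvPolynomial.weightedHomogeneousSubmodule ℚ stmt13w (2 * m)))
      = Submodule.span ℚ (Set.range fun i : ↥(st13S m) => st13v m i.1) := by
  apply le_antisymm
  · rintro x ⟨q, ⟨p, hp, rfl⟩, rfl⟩
    have hsum : stmt13D.toLinearMap p
        = ∑ d ∈ p.support, stmt13D (monomial d (coeff d p)) := by
      conv_lhs => rw [p.as_sum]
      rw [map_sum]
      rfl
    rw [hsum, map_sum]
    refine Submodule.sum_mem _ fun d hd => ?_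
    have hp' : MvPolynomial.IsWeightedHomogeneous stmt13w p (2 * m) := hp
    have hw := hp' (MvPolynomial.mem_support_iff.mp hd)
    rw [st13_weight] at hw
    by_cases h01 : d 0 + d 1 = 0
    · by_cases hS : (d 2, d 3) ∈ st13S m
      · have hd' : d = st13d m (d 2) (d 3) := by
          ext i
          have h1 := st13d_apply m (d 2) (d 3) i
          fin_cases i <;> simp_all <;> omega
        have hmon : monomial d (coeff d p)
            = (coeff d p) • monomial (st13d m (d 2) (d 3)) (1 : ℚ) := by
          rw [smul_monomial, smul_eq_mul, mul_one, ← hd']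
        rw [hmon, Derivation.map_smul, map_smul]
        exact Submodule.smul_mem _ _
          (Submodule.subset_span ⟨⟨(d 2, d 3), hS⟩, rfl⟩)
      · have h23 : d 2 = m ∧ d 3 = 0 := by
          rw [mem_st13S] at hS
          push_neg at hS
          have := hS (by omega)
          have h1 : d 2 = m := (Prod.ext_iff.mp this).1
          have h2 : d 3 = 0 := (Prod.ext_iff.mp this).2
          exact ⟨h1, h2⟩
        have h4 : d 4 = 0 := by omega
        rw [st13_D_monomial, h23.2, h4]
        simp only [Nat.cast_zero, mul_zero, monomial_zero, add_zero, map_zero]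
        exact Submodule.zero_mem _
    · have hmem := st13_D_monomial_mem d (coeff d p) (by omega)
      have hz : (stmt13I.restrictScalars ℚ).mkQ (stmt13D (monomial d (coeff d p))) = 0 := by
        rw [Submodule.mkQ_apply, Submodule.Quotient.mk_eq_zero]
        exact (Submodule.restrictScalars_mem ℚ _ _).mpr hmem
      rw [hz]
      exact Submodule.zero_mem _
  · rw [Submodule.span_le]
    rintro x ⟨i, rfl⟩
    obtain ⟨⟨a, b⟩, hi⟩ := i
    show (stmt13I.restrictScalars ℚ).mkQ (stmt13D (monomial (st13d m a b) (1 : ℚ))) ∈ _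
    refine Submodule.mem_map_of_mem (Submodule.mem_map_of_mem ?_)
    rw [MvPolynomial.mem_weightedHomogeneousSubmodule]
    apply MvPolynomial.isWeightedHomogeneous_monomial
    rw [st13_weight]
    have hab := (mem_st13S.mp hi).1
    have e0 : st13d m a b 0 = 0 := by simpa using st13d_apply m a b 0
    have e1 : st13d m a b 1 = 0 := by simpa using st13d_apply m a b 1
    have e2 : st13d m a b 2 = a := by simpa using st13d_apply m a b 2
    have e3 : st13d m a b 3 = b := by simpa using st13d_apply m a b 3
    have e4 : st13d m a b 4 = m - a - b := by simpa using st13d_apply m a b 4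
    omega

end Aux

/-- The degree `−1` derivation `∂` of `L` with `∂(y₁ʰ) = ∂(y₁ᵛ) = ∂(σy₁) = 0`,
`∂(y₂ʰ) = y₁ʰ`, `∂(y₂ᵛ) = y₁ᵛ` vanishes on all odd-degree elements of `L`, and the rank
of `∂ : L_{2n} → L_{2n-1}` equals `n(n+3)/2` for all `n ≥ 1`. -/
theorem stmt13
    (hI : ∀ p ∈ stmt13I.restrictScalars ℚ,
      stmt13D.toLinearMap p ∈ stmt13I.restrictScalars ℚ) :
    (∀ m : ℕ, Odd m →
      ∀ p ∈ MvPolynomial.weightedHomogeneousSubmodule ℚ stmt13w m,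
        stmt13D.toLinearMap p ∈ stmt13I) ∧
    (∀ n : ℕ,
      Module.finrank ℚ
        (Submodule.map
          (Submodule.mapQ (stmt13I.restrictScalars ℚ) (stmt13I.restrictScalars ℚ)
            stmt13D.toLinearMap hI)
          (stmt13L (2 * (n + 1))))
        = (n + 1) * ((n + 1) + 3) / 2) := by
  refine ⟨st13_part1, fun n => ?_⟩
  have key : Submodule.map
        (Submodule.mapQ (stmt13I.restrictScalars ℚ) (stmt13I.restrictScalars ℚ)
          stmt13D.toLinearMap hI)
        (stmt13L (2 * (n + 1)))
      = Submodule.span ℚ (Set.range fun i : ↥(st13S (n + 1)) => st13v (n + 1) i.1) := by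
    rw [stmt13L, ← Submodule.map_comp, Submodule.mapQ_mkQ, Submodule.map_comp, st13_span]
  rw [key, finrank_span_eq_card (st13_indep (n + 1)), Fintype.card_coe, card_st13S]
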